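/- arXiv:1512.04326 — 2 statements merged into one kernel-verified Lean document; each statement's English description precedes it below -/
import Mathlib

section
/- Fix a k-anxious root of unity α and let m be the smallest positive integer such that α^{k^m} = α. Let (c_1,…,c_n) be rational functions, j_0 ∈ ℕ, and let (c̃_i) = (z − α^{k^{j_0}})*(c_i), i.e. c̃_i(z) = ((z^{k^i} − α^{k^{j_0}})/(z − α^{k^{j_0}})) · c_i(z). Then for all j ≥ 0 and 1 ≤ i ≤ n: v_{α^{k^j}}(c̃_i) = v_{α^{k^j}}(c_i) − 1 if j ≡ j_0 (mod m) and i ≢ j_0 − j (mod m); v_{α^{k^j}}(c̃_i) = v_{α^{k^j}}(c_i) + 1 if i ≡ j_0 − j (mod m) and j ≢ j_0 (mod m); and v_{α^{k^j}}(c̃_i) = v_{α^{k^j}}(c_i) otherwise (with the convention +∞ ± 1 = +∞ when c_i = 0). -/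
open Polynomial

attribute [local instance] Classical.propDecidable

noncomputable section

variable {K : Type*} [Field K]

/-- Integer order of vanishing of a rational function at `α` (junk value `0` for `c = 0`). -/
def vInt (α : K) (c : RatFunc K) : ℤ :=
  (c.num.rootMultiplicity α : ℤ) - (c.denom.rootMultiplicity α : ℤ)

/-- The `(z - α)`-adic valuation on `K(z)`, with `vAt α 0 = ⊤`. -/
def vAt (α : K) (c : RatFunc K) : WithTop ℤ :=
  if c = 0 then ⊤ else (vInt α c : WithTop ℤ)

/-- Substitution `z ↦ z^i` in a rational function. -/
def substPow (i : ℕ) (c : RatFunc K) : RatFunc K :=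
  RatFunc.eval (algebraMap K (RatFunc K)) (RatFunc.X ^ i) c

/-- A polynomial viewed as a rational function. -/
def toRat (p : Polynomial K) : RatFunc K := algebraMap (Polynomial K) (RatFunc K) p

/-- A rational function is a polynomial. -/
def IsPolyFun (c : RatFunc K) : Prop := ∃ p : Polynomial K, c = toRat p

def IsRootOfUnity (α : K) : Prop := ∃ m : ℕ, 0 < m ∧ α ^ m = 1

/-- `α` is `k`-calm: zero, or a root of unity whose order is not coprime to `k`. -/
def IsCalmNum (k : ℕ) (α : K) : Prop :=
  α = 0 ∨ (0 < orderOf α ∧ ¬ Nat.Coprime (orderOf α) k)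

def IsAnxious (k : ℕ) (α : K) : Prop := ¬ IsCalmNum k α

/-- A rational function is `k`-calm: no poles at `k`-anxious numbers. -/
def IsCalmFun (k : ℕ) (c : RatFunc K) : Prop :=
  ∀ α : K, IsAnxious k α → 0 ≤ vAt α c

/-- Action of a rational function `h` on a finite sequence `(c_1, …, c_n)`;
the index `i : Fin n` stands for the 1-based index `i+1`. -/
def act (k : ℕ) (h : RatFunc K) {n : ℕ} (c : Fin n → RatFunc K) : Fin n → RatFunc K :=
  fun i => substPow (k ^ (i.1 + 1)) h / h * c i

def IsPrecalmSeq (k : ℕ) {n : ℕ} (c : Fin n → RatFunc K) : Prop :=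
  ∃ h : Polynomial K, h ≠ 0 ∧ ∀ i, IsCalmFun k (act k (toRat h) c i)

/-- Partial sums `ā_i = a_0 + … + a_{i-1}` of an infinite sequence with values in `{1,…,n}`. -/
def abarInf {n : ℕ} (a : ℕ → Fin n) (i : ℕ) : ℕ :=
  ∑ j ∈ Finset.range i, ((a j).1 + 1)

/-- Partial sums for a finite sequence (a list). -/
def abarList {n : ℕ} (l : List (Fin n)) (i : ℕ) : ℕ :=
  ((l.take i).map (fun j => j.1 + 1)).sum

/-- Full sum `ā_μ` of a finite sequence. -/
def barSum {n : ℕ} (l : List (Fin n)) : ℕ := (l.map (fun j => j.1 + 1)).sum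

/-- Calmness w.r.t. an anxious `α` that is not a root of unity and an infinite sequence. -/
def clmInf (k : ℕ) (α : K) {n : ℕ} (c : Fin n → RatFunc K) (a : ℕ → Fin n) : WithTop ℤ :=
  if ∃ i, c (a i) = 0 then ⊤
  else ((∑ᶠ i : ℕ, vInt (α ^ k ^ abarInf a i) (c (a i)) : ℤ) : WithTop ℤ)

/-- Calmness w.r.t. an anxious root of unity `α` and a finite sequence. -/
def clmList (k : ℕ) (α : K) {n : ℕ} (c : Fin n → RatFunc K) (l : List (Fin n)) : WithTop ℤ :=
  ∑ i : Fin l.length, vAt (α ^ k ^ abarList l i.1) (c (l.get i))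

/-- Calmness of a single rational function w.r.t. an anxious `α`. -/
def clmOne (k : ℕ) (α : K) (c : RatFunc K) : WithTop ℤ :=
  if hμ : ∃ μ : ℕ, 0 < μ ∧ α ^ k ^ μ = α then
    ∑ i ∈ Finset.range (Nat.find hμ), vAt (α ^ k ^ i) c
  else if c = 0 then ⊤
  else ((∑ᶠ i : ℕ, vInt (α ^ k ^ i) c : ℤ) : WithTop ℤ)

/-- The `k`-kernel of a sequence. -/
def kernelSet (k : ℕ) (a : ℕ → K) : Set (ℕ → K) :=
  { b | ∃ e r : ℕ, r < k ^ e ∧ b = fun i => a (k ^ e * i + r) }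

/-- `k`-regularity of a formal power series. -/
def IsRegularSeries (k : ℕ) (f : PowerSeries K) : Prop :=
  FiniteDimensional K (Submodule.span K (kernelSet k (fun i => PowerSeries.coeff (R := K) i f)))

/-- Cartier operator `Λ_{k,r}`. -/
def cartier (k r : ℕ) (f : PowerSeries K) : PowerSeries K :=
  PowerSeries.mk fun i => PowerSeries.coeff (R := K) (k * i + r) f

/-- Substitution `z ↦ z^m` in a power series (for `m ≥ 1`). -/
def psSubstPow (m : ℕ) (f : PowerSeries K) : PowerSeries K :=
  PowerSeries.mk fun i => if m ∣ i then PowerSeries.coeff (R := K) (i / m) f else 0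

/-- `f` satisfies the Mahler equation `f(z) = Σ_{i=1}^n c_i(z) f(z^{k^i})`. -/
def SatisfiesMahler (k : ℕ) {n : ℕ} (c : Fin n → RatFunc K) (f : PowerSeries K) : Prop :=
  ∃ (q : Polynomial K) (p : Fin n → Polynomial K), q ≠ 0 ∧
    (∀ i, toRat q * c i = toRat (p i)) ∧
    (q : PowerSeries K) * f = ∑ i : Fin n, ((p i : PowerSeries K) * psSubstPow (k ^ (i.1 + 1)) f)


/-- Substitution `z ↦ z^m` in a formal Laurent series (for `m ≥ 1`). -/
def lsSubstPow (m : ℕ) (g : LaurentSeries K) : LaurentSeries K :=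
  if h : 0 < m then
    HahnSeries.embDomain
      (OrderEmbedding.ofStrictMono (fun n : ℤ => (m : ℤ) * n)
        (fun a b hab => by
          exact mul_lt_mul_of_pos_left hab (by exact_mod_cast h))) g
  else 0

/-- A Laurent series `g` satisfies the Mahler equation `g(z) = Σ_{i=1}^n b_i(z) g(z^{k^i})`
with polynomial coefficients. -/
def SatisfiesMahlerPolyLS (k : ℕ) {n : ℕ} (b : Fin n → Polynomial K) (g : LaurentSeries K) : Prop :=
  g = ∑ i : Fin n, (((b i : PowerSeries K) : LaurentSeries K) * lsSubstPow (k ^ (i.1 + 1)) g)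

/-- Coefficients `d_{i,m}` of the special operators associated to `(c_1, …, c_n)`:
`dCoef k c m i` is `d_{i,m}`, with value `0` outside the range `1 ≤ i ≤ m + n`. -/
def dCoef (k : ℕ) {n : ℕ} (c : Fin n → RatFunc K) : ℕ → ℕ → RatFunc K
  | 0 => fun i => if h : 1 ≤ i ∧ i ≤ n then c ⟨i - 1, by omega⟩ else 0
  | m + 1 => fun i =>
      if _h1 : i ≤ m then dCoef k c m i
      else if _h2 : i = m + 1 then 0
      else if h3 : i ≤ m + 1 + n then
        dCoef k c m i + dCoef k c m (m + 1) * substPow (k ^ (m + 1)) (c ⟨i - m - 2, by omega⟩)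
      else 0

end

section AuxStmt10

variable {K : Type*} [Field K]

lemma vInt_mul' (α : K) {c d : RatFunc K} (hc : c ≠ 0) (hd : d ≠ 0) :
    vInt α (c * d) = vInt α c + vInt α d := by
  have hdd : c.denom * d.denom ≠ 0 :=
    mul_ne_zero (RatFunc.denom_ne_zero c) (RatFunc.denom_ne_zero d)
  have hnn : c.num * d.num ≠ 0 := mul_ne_zero (RatFunc.num_ne_zero hc) (RatFunc.num_ne_zero hd)
  have hcd : c * d ≠ 0 := mul_ne_zero hc hd
  have key : (c * d).num * (c.denom * d.denom) = (c.num * d.num) * (c * d).denom := by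
    rw [RatFunc.num_mul_eq_mul_denom_iff hdd, map_mul, map_mul, ← div_mul_div_comm,
      RatFunc.num_div_denom, RatFunc.num_div_denom]
  have h3 : (c * d).num.rootMultiplicity α + (c.denom.rootMultiplicity α
        + d.denom.rootMultiplicity α)
      = (c.num.rootMultiplicity α + d.num.rootMultiplicity α)
        + (c * d).denom.rootMultiplicity α := by
    rw [← Polynomial.rootMultiplicity_mul hdd,
      ← Polynomial.rootMultiplicity_mul (mul_ne_zero (RatFunc.num_ne_zero hcd) hdd), key,
      Polynomial.rootMultiplicity_mul (mul_ne_zero hnn (RatFunc.denom_ne_zero _)),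
      Polynomial.rootMultiplicity_mul hnn]
  unfold vInt
  omega

lemma vInt_toRat (α : K) (p : Polynomial K) :
    vInt α (toRat p) = p.rootMultiplicity α := by
  unfold vInt toRat
  rw [RatFunc.num_algebraMap, RatFunc.denom_algebraMap]
  have h1 : (1 : Polynomial K).rootMultiplicity α = 0 :=
    Polynomial.rootMultiplicity_eq_zero (by simp [Polynomial.IsRoot])
  rw [h1]
  simp

lemma rm_pow_sub_one {e : ℕ} {γ β : K} (he : ((e : ℕ) : K) ≠ 0) (hγ : γ ≠ 0) (hβ : β ^ e = γ) :
    (Polynomial.X ^ e - Polynomial.C γ : Polynomial K).rootMultiplicity β = 1 := by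
  have hepos : 0 < e := by
    rcases Nat.eq_zero_or_pos e with h | h
    · subst h; simp at he
    · exact h
  have hne := Polynomial.X_pow_sub_C_ne_zero hepos γ
  have hroot : (Polynomial.X ^ e - Polynomial.C γ : Polynomial K).IsRoot β := by
    simp [Polynomial.IsRoot, hβ]
  have h1 := (Polynomial.rootMultiplicity_pos hne).mpr hroot
  have h2 := Polynomial.rootMultiplicity_le_one_of_separable
    (Polynomial.separable_X_pow_sub_C γ he hγ) β
  omega

lemma substPow_toRat_linear (e : ℕ) (γ : K) :
    substPow e (toRat (Polynomial.X - Polynomial.C γ))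
      = toRat (Polynomial.X ^ e - Polynomial.C γ) := by
  unfold substPow toRat
  rw [RatFunc.eval_algebraMap]
  simp [Polynomial.eval₂_sub, RatFunc.algebraMap_X, RatFunc.algebraMap_C, map_sub, map_pow]

end AuxStmt10

theorem stmt10 {K : Type*} [Field K] [IsAlgClosed K] (k : ℕ) (hk : 2 ≤ k)
    (hch : ∀ p : ℕ, p.Prime → CharP K p → ¬ p ∣ k)
    (α : K) (hα : IsAnxious k α) (hru : IsRootOfUnity α)
    (m : ℕ) (hm : 0 < m) (hmfix : α ^ k ^ m = α)
    (hmin : ∀ m' : ℕ, 0 < m' → α ^ k ^ m' = α → m ≤ m')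
    {n : ℕ} (c : Fin n → RatFunc K) (j₀ : ℕ) (j : ℕ) (i : Fin n) :
    ((j ≡ j₀ [MOD m]) ∧ ¬ (i.1 + 1 + j ≡ j₀ [MOD m]) →
      vAt (α ^ k ^ j) (act k (toRat (Polynomial.X - Polynomial.C (α ^ k ^ j₀))) c i)
        = (vAt (α ^ k ^ j) (c i)).map (fun x => x - 1)) ∧
    ((i.1 + 1 + j ≡ j₀ [MOD m]) ∧ ¬ (j ≡ j₀ [MOD m]) →
      vAt (α ^ k ^ j) (act k (toRat (Polynomial.X - Polynomial.C (α ^ k ^ j₀))) c i)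
        = (vAt (α ^ k ^ j) (c i)).map (fun x => x + 1)) ∧
    (¬ ((j ≡ j₀ [MOD m]) ∧ ¬ (i.1 + 1 + j ≡ j₀ [MOD m])) →
     ¬ ((i.1 + 1 + j ≡ j₀ [MOD m]) ∧ ¬ (j ≡ j₀ [MOD m])) →
      vAt (α ^ k ^ j) (act k (toRat (Polynomial.X - Polynomial.C (α ^ k ^ j₀))) c i)
        = vAt (α ^ k ^ j) (c i)) := by
  classical
  -- basic facts about α
  have hαne : α ≠ 0 := fun h => hα (Or.inl h)
  have hd : 0 < orderOf α := by
    obtain ⟨m', hm', h'⟩ := hru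
    exact (isOfFinOrder_iff_pow_eq_one.mpr ⟨m', hm', h'⟩).orderOf_pos
  have hcop : Nat.Coprime k (orderOf α) := by
    by_contra h
    exact hα (Or.inr ⟨hd, fun hc => h hc.symm⟩)
  haveI : NeZero (orderOf α) := ⟨hd.ne'⟩
  set u : (ZMod (orderOf α))ˣ := ZMod.unitOfCoprime k hcop with hudef
  have hu : ∀ a : ℕ, ((u ^ a : (ZMod (orderOf α))ˣ) : ZMod (orderOf α))
      = ((k ^ a : ℕ) : ZMod (orderOf α)) := fun a => by
    rw [Units.val_pow_eq_pow_val, hudef, ZMod.coe_unitOfCoprime, Nat.cast_pow]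
  have hαpow : ∀ a b : ℕ, (α ^ a = α ^ b ↔ a ≡ b [MOD orderOf α]) := fun a b => by
    have hw : (α ^ a = α ^ b) ↔ (Units.mk0 α hαne) ^ a = (Units.mk0 α hαne) ^ b := by
      rw [Units.ext_iff, Units.val_pow_eq_pow_val, Units.val_pow_eq_pow_val, Units.val_mk0]
    rw [hw, pow_eq_pow_iff_modEq, ← orderOf_units, Units.val_mk0]
  have chain : ∀ a b : ℕ, (α ^ k ^ a = α ^ k ^ b ↔ u ^ a = u ^ b) := fun a b => by
    rw [hαpow, ← ZMod.natCast_eq_natCast_iff (k ^ a) (k ^ b) (orderOf α),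
      ← hu a, ← hu b]
    exact Units.ext_iff.symm
  have hou : orderOf u = m := by
    have hupos : 0 < orderOf u := orderOf_pos u
    refine le_antisymm (Nat.le_of_dvd hm (orderOf_dvd_of_pow_eq_one ?_)) (hmin _ hupos ?_)
    · have h1 : u ^ m = u ^ 0 := (chain m 0).mp (by simpa using hmfix)
      simpa using h1
    · have h2 : α ^ k ^ orderOf u = α ^ k ^ 0 :=
        (chain (orderOf u) 0).mpr (by simp [pow_orderOf_eq_one])
      simpa using h2
  have key : ∀ a b : ℕ, (α ^ k ^ a = α ^ k ^ b ↔ a ≡ b [MOD m]) := fun a b => by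
    rw [chain, pow_eq_pow_iff_modEq, hou]
  -- characteristic
  have hkK : (k : K) ≠ 0 := by
    intro h
    have hdvd := (CharP.cast_eq_zero_iff K (ringChar K) k).mp h
    rcases CharP.char_is_prime_or_zero K (ringChar K) with hp | hp
    · exact hch _ hp (ringChar.charP K) hdvd
    · rw [hp] at hdvd
      omega
  -- abbreviations
  set e : ℕ := k ^ (i.1 + 1) with hedef
  set γ : K := α ^ k ^ j₀ with hγdef
  set β : K := α ^ k ^ j with hβdef
  have hepos : 0 < e := pow_pos (by omega) _
  have heK : ((e : ℕ) : K) ≠ 0 := by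
    simp only [hedef]
    push_cast
    exact pow_ne_zero _ hkK
  have hγ0 : γ ≠ 0 := pow_ne_zero _ hαne
  have hβe : β ^ e = α ^ k ^ (j + (i.1 + 1)) := by
    rw [hβdef, hedef, ← pow_mul, ← pow_add]
  have hcondA : (β ^ e = γ) ↔ (i.1 + 1 + j ≡ j₀ [MOD m]) := by
    rw [hβe, hγdef, key, Nat.add_comm]
  have hcondg : (β = γ) ↔ (j ≡ j₀ [MOD m]) := by
    rw [hβdef, hγdef, key]
  -- rational function facts
  have hA0 : toRat (Polynomial.X ^ e - Polynomial.C γ) ≠ (0 : RatFunc K) :=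
    RatFunc.algebraMap_ne_zero (Polynomial.X_pow_sub_C_ne_zero hepos γ)
  have hg0 : toRat (Polynomial.X - Polynomial.C γ) ≠ (0 : RatFunc K) :=
    RatFunc.algebraMap_ne_zero (Polynomial.X_sub_C_ne_zero γ)
  have hq0 : toRat (Polynomial.X ^ e - Polynomial.C γ) / toRat (Polynomial.X - Polynomial.C γ)
      ≠ (0 : RatFunc K) := div_ne_zero hA0 hg0
  have hact : act k (toRat (Polynomial.X - Polynomial.C γ)) c i
      = toRat (Polynomial.X ^ e - Polynomial.C γ) / toRat (Polynomial.X - Polynomial.C γ)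
        * c i := by
    show substPow e (toRat (Polynomial.X - Polynomial.C γ)) / _ * _ = _
    rw [substPow_toRat_linear]
  have hvdiv : vInt β (toRat (Polynomial.X ^ e - Polynomial.C γ)
        / toRat (Polynomial.X - Polynomial.C γ))
      = ((Polynomial.X ^ e - Polynomial.C γ : Polynomial K).rootMultiplicity β : ℤ)
        - ((Polynomial.X - Polynomial.C γ : Polynomial K).rootMultiplicity β : ℤ) := by
    have h1 : toRat (Polynomial.X ^ e - Polynomial.C γ) / toRat (Polynomial.X - Polynomial.C γ)
        * toRat (Polynomial.X - Polynomial.C γ) = toRat (Polynomial.X ^ e - Polynomial.C γ) :=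
      div_mul_cancel₀ _ hg0
    have h2 := vInt_mul' β hq0 hg0
    rw [h1, vInt_toRat, vInt_toRat] at h2
    omega
  have hmain : ∀ hc : c i ≠ 0,
      vAt β (act k (toRat (Polynomial.X - Polynomial.C γ)) c i)
        = ((vInt β (c i)
            + ((Polynomial.X ^ e - Polynomial.C γ : Polynomial K).rootMultiplicity β : ℤ)
            - ((Polynomial.X - Polynomial.C γ : Polynomial K).rootMultiplicity β : ℤ) : ℤ)
          : WithTop ℤ) := by
    intro hc
    rw [hact, vAt, if_neg (mul_ne_zero hq0 hc), vInt_mul' β hq0 hc, hvdiv]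
    congr 1
    ring
  -- the three cases
  by_cases hc : c i = 0
  · have hz : act k (toRat (Polynomial.X - Polynomial.C γ)) c i = 0 := by
      rw [hact, hc, mul_zero]
    refine ⟨fun _ => ?_, fun _ => ?_, fun _ _ => ?_⟩ <;>
      simp [vAt, hz, hc]
  · have hvc : vAt β (c i) = ((vInt β (c i) : ℤ) : WithTop ℤ) := by
      rw [vAt, if_neg hc]
    refine ⟨fun ⟨h1, h2⟩ => ?_, fun ⟨h1, h2⟩ => ?_, fun h1 h2 => ?_⟩
    · have rA : (Polynomial.X ^ e - Polynomial.C γ : Polynomial K).rootMultiplicity β = 0 :=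
        Polynomial.rootMultiplicity_eq_zero (by
          simp only [Polynomial.IsRoot, Polynomial.eval_sub, Polynomial.eval_pow,
            Polynomial.eval_X, Polynomial.eval_C]
          exact fun h => h2 (hcondA.mp (sub_eq_zero.mp h)))
      have rg : (Polynomial.X - Polynomial.C γ : Polynomial K).rootMultiplicity β = 1 := by
        rw [hcondg.mpr h1]
        exact Polynomial.rootMultiplicity_X_sub_C_self
      rw [hmain hc, hvc, rA, rg, WithTop.map_coe]
      norm_num
    · have rA : (Polynomial.X ^ e - Polynomial.C γ : Polynomial K).rootMultiplicity β = 1 :=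
        rm_pow_sub_one heK hγ0 (hcondA.mpr h1)
      have rg : (Polynomial.X - Polynomial.C γ : Polynomial K).rootMultiplicity β = 0 :=
        Polynomial.rootMultiplicity_eq_zero (by
          simp only [Polynomial.IsRoot, Polynomial.eval_sub, Polynomial.eval_X, Polynomial.eval_C]
          exact fun h => h2 (hcondg.mp (sub_eq_zero.mp h)))
      rw [hmain hc, hvc, rA, rg, WithTop.map_coe]
      norm_num
    · by_cases hj : j ≡ j₀ [MOD m]
      · have hi : i.1 + 1 + j ≡ j₀ [MOD m] := by
          by_contra hx
          exact h1 ⟨hj, hx⟩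
        have rA : (Polynomial.X ^ e - Polynomial.C γ : Polynomial K).rootMultiplicity β = 1 :=
          rm_pow_sub_one heK hγ0 (hcondA.mpr hi)
        have rg : (Polynomial.X - Polynomial.C γ : Polynomial K).rootMultiplicity β = 1 := by
          rw [hcondg.mpr hj]
          exact Polynomial.rootMultiplicity_X_sub_C_self
        rw [hmain hc, hvc, rA, rg]
        norm_num
      · have hi : ¬ (i.1 + 1 + j ≡ j₀ [MOD m]) := fun hx => h2 ⟨hx, hj⟩
        have rA : (Polynomial.X ^ e - Polynomial.C γ : Polynomial K).rootMultiplicity β = 0 :=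
          Polynomial.rootMultiplicity_eq_zero (by
            simp only [Polynomial.IsRoot, Polynomial.eval_sub, Polynomial.eval_pow,
              Polynomial.eval_X, Polynomial.eval_C]
            exact fun h => hi (hcondA.mp (sub_eq_zero.mp h)))
        have rg : (Polynomial.X - Polynomial.C γ : Polynomial K).rootMultiplicity β = 0 :=
          Polynomial.rootMultiplicity_eq_zero (by
            simp only [Polynomial.IsRoot, Polynomial.eval_sub, Polynomial.eval_X,
              Polynomial.eval_C]
            exact fun h => hj (hcondg.mp (sub_eq_zero.mp h)))
        rw [hmain hc, hvc, rA, rg]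
        norm_num
end

section
/- Fix a k-anxious root of unity α, let m be the smallest positive integer such that α^{k^m} = α, and let 𝒜 be the disjoint union of the sets A_{α^{k^i}} for 0 ≤ i ≤ m−1. Let (c_1,…,c_n) be a sequence of rational functions of arbitrary length n ≥ 1. If clm_{(a_i)}(c_i) ≥ 0 for every (a_i) ∈ 𝒜, then there exists a nonzero polynomial h ∈ K[z] such that no term of the sequence h*(c_i) has a pole at α^{k^i} for any i ≥ 0. -/
open Polynomial

attribute [local instance] Classical.propDecidable

noncomputable section
variable {K : Type*} [Field K]

lemma toRat_ne_zero {p : Polynomial K} (hp : p ≠ 0) : toRat p ≠ 0 :=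
  RatFunc.algebraMap_ne_zero hp

lemma vInt_div (α : K) {p q : Polynomial K} (hp : p ≠ 0) (hq : q ≠ 0) :
    vInt α (toRat p / toRat q) = (p.rootMultiplicity α : ℤ) - q.rootMultiplicity α := by
  set c := toRat p / toRat q with hc
  have hc0 : c ≠ 0 := div_ne_zero (toRat_ne_zero hp) (toRat_ne_zero hq)
  have hnum : c.num ≠ 0 := RatFunc.num_ne_zero hc0
  have hden : c.denom ≠ 0 := c.denom_ne_zero
  have key : c.num * q = c.denom * p := by
    have h1 : toRat c.num / toRat c.denom = toRat p / toRat q := by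
      rw [← hc]; exact c.num_div_denom
    have h2 : toRat c.num * toRat q = toRat p * toRat c.denom :=
      (div_eq_div_iff (toRat_ne_zero hden) (toRat_ne_zero hq)).mp h1
    have h3 : toRat (c.num * q) = toRat (c.denom * p) := by
      unfold toRat at h2 ⊢; rw [map_mul, map_mul]; linear_combination h2
    exact RatFunc.algebraMap_injective K h3
  have := congrArg (Polynomial.rootMultiplicity α) key
  rw [Polynomial.rootMultiplicity_mul (mul_ne_zero hnum hq),
    Polynomial.rootMultiplicity_mul (mul_ne_zero hden hp)] at this
  unfold vInt
  omega

lemma substPow_toRat (N : ℕ) (h : Polynomial K) :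
    substPow N (toRat h) = toRat (h.comp (Polynomial.X ^ N)) := by
  unfold substPow toRat
  rw [RatFunc.eval_algebraMap]
  simp only [Algebra.algebraMap_self_apply]
  rw [Polynomial.comp, Polynomial.hom_eval₂]
  have hC : (algebraMap (Polynomial K) (RatFunc K)).comp Polynomial.C
      = algebraMap K (RatFunc K) := by
    apply RingHom.ext; intro x
    simp [IsScalarTower.algebraMap_apply K (Polynomial K) (RatFunc K)]
  have hX : algebraMap (Polynomial K) (RatFunc K) (Polynomial.X ^ N) = RatFunc.X ^ N := by
    rw [map_pow, RatFunc.algebraMap_X]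
  rw [hC, hX]

end
noncomputable section
variable {K : Type*} [Field K]

lemma rootMult_pow (β : K) (p : Polynomial K) (hp : p ≠ 0) (r : ℕ) :
    (p ^ r).rootMultiplicity β = r * p.rootMultiplicity β := by
  induction r with
  | zero => simp [Polynomial.rootMultiplicity_eq_zero, Polynomial.IsRoot]
  | succ r ih =>
      rw [pow_succ, Polynomial.rootMultiplicity_mul (mul_ne_zero (pow_ne_zero r hp) hp), ih]
      ring

lemma rootMult_one_XN {β : K} (hβ : β ≠ 0) {N : ℕ} (hN : (N : K) ≠ 0) :
    (Polynomial.X ^ N - Polynomial.C (β ^ N)).rootMultiplicity β = 1 := by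
  set p : Polynomial K := Polynomial.X ^ N - Polynomial.C (β ^ N) with hpdef
  have hN1 : 1 ≤ N := by
    rcases Nat.eq_zero_or_pos N with h | h
    · subst h; simp at hN
    · exact h
  have hp0 : p ≠ 0 := Polynomial.X_pow_sub_C_ne_zero hN1 _
  have hroot : p.IsRoot β := by simp [hpdef, Polynomial.IsRoot]
  have hge : 1 ≤ p.rootMultiplicity β := (Polynomial.rootMultiplicity_pos hp0).mpr hroot
  have hder : Polynomial.eval β (Polynomial.derivative p) ≠ 0 := by
    have : Polynomial.derivative p = Polynomial.C (N : K) * Polynomial.X ^ (N - 1) := by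
      rw [hpdef, Polynomial.derivative_sub, Polynomial.derivative_C, Polynomial.derivative_X_pow,
        sub_zero]
    rw [this]
    simp only [Polynomial.eval_mul, Polynomial.eval_C, Polynomial.eval_pow, Polynomial.eval_X]
    exact mul_ne_zero hN (pow_ne_zero _ hβ)
  by_contra hne
  have h2 : 2 ≤ p.rootMultiplicity β := by omega
  have hdvd : (Polynomial.X - Polynomial.C β) ^ 2 ∣ p :=
    dvd_trans (pow_dvd_pow _ h2) (Polynomial.pow_rootMultiplicity_dvd p β)
  obtain ⟨q, hq⟩ := hdvd
  apply hder
  rw [hq, Polynomial.derivative_mul, Polynomial.derivative_pow]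
  simp

lemma rootMult_comp_pow {β : K} (hβ : β ≠ 0) {N : ℕ} (hN : (N : K) ≠ 0)
    {h : Polynomial K} (hh : h ≠ 0) :
    (h.comp (Polynomial.X ^ N)).rootMultiplicity β = h.rootMultiplicity (β ^ N) := by
  set γ := β ^ N with hγ
  set r := h.rootMultiplicity γ with hr
  obtain ⟨g, hfac, hnd⟩ := h.exists_eq_pow_rootMultiplicity_mul_and_not_dvd hh γ
  have hgγ : Polynomial.eval γ g ≠ 0 := fun hz => hnd (Polynomial.dvd_iff_isRoot.mpr hz)
  have hcomp : h.comp (Polynomial.X ^ N)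
      = (Polynomial.X ^ N - Polynomial.C γ) ^ r * g.comp (Polynomial.X ^ N) := by
    rw [hfac]
    simp [Polynomial.mul_comp, Polynomial.pow_comp, Polynomial.sub_comp, hr]
  have hgβ : Polynomial.eval β (g.comp (Polynomial.X ^ N)) ≠ 0 := by
    rwa [Polynomial.eval_comp, Polynomial.eval_pow, Polynomial.eval_X]
  have hgc0 : g.comp (Polynomial.X ^ N) ≠ 0 := fun hz => by simp [hz] at hgβ
  have hXN0 : (Polynomial.X ^ N - Polynomial.C γ) ≠ 0 := by
    intro hz
    have := rootMult_one_XN hβ hN (K := K)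
    rw [← hγ] at this
    rw [hz] at this
    simp at this
  rw [hcomp, Polynomial.rootMultiplicity_mul (mul_ne_zero (pow_ne_zero r hXN0) hgc0),
    rootMult_pow _ _ hXN0, hγ, rootMult_one_XN hβ hN,
    Polynomial.rootMultiplicity_eq_zero (by simpa [Polynomial.IsRoot] using hgβ)]
  omega

end
noncomputable section
variable {K : Type*} [Field K]

lemma pow_tower (α : K) (k a b : ℕ) : (α ^ k ^ a) ^ k ^ b = α ^ k ^ (a + b) := by
  rw [← pow_mul, ← pow_add]

lemma cast_k_ne_zero {K : Type*} [Field K] {k : ℕ} (hk : 2 ≤ k)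
    (hch : ∀ p : ℕ, p.Prime → CharP K p → ¬ p ∣ k) : (k : K) ≠ 0 := by
  intro h0
  haveI inst := ringChar.charP K
  rcases CharP.char_is_prime_or_zero K (ringChar K) with hp | hp
  · exact hch _ hp inst ((CharP.cast_eq_zero_iff K (ringChar K) k).mp h0)
  · rw [hp] at inst
    haveI : CharZero K := CharP.charP_to_charZero K
    have : k = 0 := Nat.cast_eq_zero.mp h0
    omega

lemma barSum_cons {n : ℕ} (i : Fin n) (l : List (Fin n)) :
    barSum (i :: l) = (i.1 + 1) + barSum l := by simp [barSum]

lemma barSum_append {n : ℕ} (l1 l2 : List (Fin n)) :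
    barSum (l1 ++ l2) = barSum l1 + barSum l2 := by simp [barSum]

def Wgt (k : ℕ) (α : K) {n : ℕ} (c : Fin n → RatFunc K) : ℕ → List (Fin n) → ℤ
  | _, [] => 0
  | t, i :: l => vInt (α ^ k ^ t) (c i) + Wgt k α c (t + (i.1 + 1)) l

lemma Wgt_append (k : ℕ) (α : K) {n : ℕ} (c : Fin n → RatFunc K) (t : ℕ)
    (l1 l2 : List (Fin n)) :
    Wgt k α c t (l1 ++ l2) = Wgt k α c t l1 + Wgt k α c (t + barSum l1) l2 := by
  induction l1 generalizing t with
  | nil => simp [Wgt, barSum]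
  | cons i l ih =>
      rw [List.cons_append, Wgt, Wgt, ih, barSum_cons, ← Nat.add_assoc]
      ring_nf

lemma Wgt_congr (k : ℕ) (α : K) {n : ℕ} (c : Fin n → RatFunc K) {a b : ℕ}
    (hper : ∀ s : ℕ, α ^ k ^ (a + s) = α ^ k ^ (b + s)) (l : List (Fin n)) :
    Wgt k α c a l = Wgt k α c b l := by
  induction l generalizing a b with
  | nil => rfl
  | cons i l ih =>
      rw [Wgt, Wgt]
      have h0 : α ^ k ^ a = α ^ k ^ b := by simpa using hper 0
      rw [h0, ih (a := a + (i.1 + 1)) (b := b + (i.1 + 1)) (fun s => by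
        have := hper ((i.1 + 1) + s)
        rwa [show a + ((i.1+1) + s) = a + (i.1+1) + s by omega,
          show b + ((i.1+1) + s) = b + (i.1+1) + s by omega] at this)]

lemma clmList_nil (k : ℕ) (β : K) {n : ℕ} (c : Fin n → RatFunc K) :
    clmList k β c [] = 0 := by
  simp [clmList]

lemma clmList_cons (k : ℕ) (β : K) {n : ℕ} (c : Fin n → RatFunc K) (i : Fin n)
    (l : List (Fin n)) :
    clmList k β c (i :: l) = vAt β (c i) + clmList k (β ^ k ^ (i.1 + 1)) c l := by
  unfold clmList
  show (∑ j : Fin (l.length + 1), vAt (β ^ k ^ abarList (i :: l) j.1) (c ((i :: l).get j))) = _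
  rw [Fin.sum_univ_succ]
  refine congrArg₂ (· + ·) ?_ ?_
  · simp [abarList]
  · apply Finset.sum_congr rfl
    intro j _
    have h1 : abarList (i :: l) (j.succ : Fin (l.length+1)).1 = (i.1 + 1) + abarList l j.1 := by
      simp [abarList, List.take_succ_cons, Fin.val_succ]
    rw [h1, ← pow_tower]
    rfl

lemma clm_eq_Wgt (k : ℕ) (α : K) {n : ℕ} (c : Fin n → RatFunc K) (t : ℕ)
    (l : List (Fin n)) (hgood : ∀ x ∈ l, c x ≠ 0) :
    clmList k (α ^ k ^ t) c l = ((Wgt k α c t l : ℤ) : WithTop ℤ) := by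
  induction l generalizing t with
  | nil => simp [clmList_nil, Wgt]
  | cons i l ih =>
      rw [clmList_cons, pow_tower, Wgt,
        ih (t + (i.1 + 1)) (fun x hx => hgood x (List.mem_cons_of_mem i hx))]
      have hci : c i ≠ 0 := hgood i List.mem_cons_self
      rw [vAt, if_neg hci]
      push_cast
      rfl

end
noncomputable section
variable {K : Type*} [Field K]

def walkVal (k : ℕ) (α : K) {n : ℕ} (c : Fin n → RatFunc K) (m j : ℕ)
    (w : Fin m × Fin (m + 1) × (Fin m → Fin n)) : ℤ :=
  if (∀ x ∈ (List.ofFn w.2.2).take w.2.1.1, c x ≠ 0) ∧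
      (w.1.1 + barSum ((List.ofFn w.2.2).take w.2.1.1)) % m = j
  then - Wgt k α c w.1.1 ((List.ofFn w.2.2).take w.2.1.1) else 0

def Epot (k : ℕ) (α : K) {n : ℕ} (c : Fin n → RatFunc K) (m : ℕ) (hm : 0 < m) (hn : 0 < n)
    (j : ℕ) : ℤ :=
  Finset.univ.sup' ⟨(⟨0, hm⟩, ⟨0, Nat.succ_pos m⟩, fun _ => ⟨0, hn⟩), Finset.mem_univ _⟩
    (walkVal k α c m j)

lemma le_Epot (k : ℕ) (α : K) {n : ℕ} (c : Fin n → RatFunc K) (m : ℕ) (hm : 0 < m)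
    (hn : 0 < n) (j : ℕ) (w : Fin m × Fin (m + 1) × (Fin m → Fin n)) :
    walkVal k α c m j w ≤ Epot k α c m hm hn j :=
  Finset.le_sup' _ (Finset.mem_univ w)

lemma Epot_eq_walkVal (k : ℕ) (α : K) {n : ℕ} (c : Fin n → RatFunc K) (m : ℕ) (hm : 0 < m)
    (hn : 0 < n) (j : ℕ) :
    ∃ w, Epot k α c m hm hn j = walkVal k α c m j w := by
  obtain ⟨w, _, hw⟩ := Finset.exists_mem_eq_sup'
    (⟨(⟨0, hm⟩, ⟨0, Nat.succ_pos m⟩, fun _ => ⟨0, hn⟩), Finset.mem_univ _⟩ :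
      (Finset.univ : Finset (Fin m × Fin (m + 1) × (Fin m → Fin n))).Nonempty)
    (walkVal k α c m j)
  exact ⟨w, hw⟩

lemma rootMult_prod_eq (β : K) (s : Finset ℕ) (f : ℕ → Polynomial K)
    (hf : ∀ t ∈ s, f t ≠ 0) :
    (∏ t ∈ s, f t).rootMultiplicity β = ∑ t ∈ s, (f t).rootMultiplicity β := by
  induction s using Finset.induction with
  | empty => simp [Polynomial.rootMultiplicity_eq_zero, Polynomial.IsRoot]
  | @insert a s' hx ih =>
      rw [Finset.prod_insert hx, Finset.sum_insert hx,
        Polynomial.rootMultiplicity_mul (mul_ne_zero (hf a (Finset.mem_insert_self a s'))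
          (Finset.prod_ne_zero_iff.mpr (fun t ht => hf t (Finset.mem_insert_of_mem ht)))),
        ih (fun t ht => hf t (Finset.mem_insert_of_mem ht))]

lemma Wgt_nil (k : ℕ) (α : K) {n : ℕ} (c : Fin n → RatFunc K) (t : ℕ) :
    Wgt k α c t [] = 0 := rfl

lemma Wgt_singleton (k : ℕ) (α : K) {n : ℕ} (c : Fin n → RatFunc K) (t : ℕ) (i : Fin n) :
    Wgt k α c t [i] = vInt (α ^ k ^ t) (c i) := by
  show vInt (α ^ k ^ t) (c i) + 0 = _
  ring

end
theorem stmt14 {K : Type*} [Field K] [IsAlgClosed K] (k : ℕ) (hk : 2 ≤ k)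
    (hch : ∀ p : ℕ, p.Prime → CharP K p → ¬ p ∣ k)
    (α : K) (hα : IsAnxious k α) (hru : IsRootOfUnity α)
    (m : ℕ) (hm : 0 < m) (hmfix : α ^ k ^ m = α)
    (hmin : ∀ m' : ℕ, 0 < m' → α ^ k ^ m' = α → m ≤ m')
    {n : ℕ} (hn : 1 ≤ n) (c : Fin n → RatFunc K)
    (hclm : ∀ i : ℕ, i < m → ∀ l : List (Fin n),
      α ^ k ^ (i + barSum l) = α ^ k ^ i → 0 ≤ clmList k (α ^ k ^ i) c l) :
    ∃ h : Polynomial K, h ≠ 0 ∧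
      ∀ (j : ℕ) (i : Fin n), 0 ≤ vAt (α ^ k ^ j) (act k (toRat h) c i) := by
  have hα0 : α ≠ 0 := fun h => hα (Or.inl h)
  have hkK : (k : K) ≠ 0 := cast_k_ne_zero hk hch
  have modadd : ∀ a b d : ℕ, a % m = b % m → (a + d) % m = (b + d) % m :=
    fun a b d h => Nat.ModEq.add_right d h
  have modmod : ∀ t : ℕ, t % m % m = t % m := fun t => Nat.mod_mod_of_dvd t dvd_rfl
  -- periodicity
  have hper_add : ∀ a : ℕ, α ^ k ^ (m + a) = α ^ k ^ a := by
    intro a; rw [← pow_tower, hmfix]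
  have hper_mul : ∀ q a : ℕ, α ^ k ^ (q * m + a) = α ^ k ^ a := by
    intro q
    induction q with
    | zero => simp
    | succ q ih =>
        intro a
        rw [show (q + 1) * m + a = m + (q * m + a) by ring, hper_add, ih]
  have hmod : ∀ a : ℕ, α ^ k ^ a = α ^ k ^ (a % m) := by
    intro a
    conv_lhs => rw [show a = (a / m) * m + a % m by
      rw [Nat.mul_comm]; exact (Nat.div_add_mod a m).symm]
    exact hper_mul _ _
  have hmodeq : ∀ a b : ℕ, a % m = b % m → α ^ k ^ a = α ^ k ^ b := by
    intro a b h; rw [hmod a, hmod b, h]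
  -- distinctness
  have hdist : ∀ s t : ℕ, s < m → t < m → α ^ k ^ s = α ^ k ^ t → s = t := by
    have key : ∀ s t : ℕ, s < t → t < m → α ^ k ^ s = α ^ k ^ t → False := by
      intro s t hlt htm heq
      have h2 : (α ^ k ^ s) ^ k ^ (m - t) = (α ^ k ^ t) ^ k ^ (m - t) := by rw [heq]
      rw [pow_tower, pow_tower, show t + (m - t) = m by omega, hmfix] at h2
      have := hmin (s + (m - t)) (by omega) h2
      omega
    intro s t hs ht hst
    rcases Nat.lt_trichotomy s t with h | h | h
    · exact absurd hst (fun he => key s t h ht he)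
    · exact h
    · exact absurd hst (fun he => key t s h hs he.symm)
  -- nonnegative cycles
  have hcyc : ∀ (t : ℕ) (l : List (Fin n)), (∀ x ∈ l, c x ≠ 0) →
      (t + barSum l) % m = t % m → 0 ≤ Wgt k α c t l := by
    intro t l hg hcl
    have ht' : t % m < m := Nat.mod_lt _ hm
    have h1 : Wgt k α c t l = Wgt k α c (t % m) l :=
      Wgt_congr k α c (fun s => hmodeq _ _ (modadd t (t % m) s (modmod t).symm)) l
    have h2 : α ^ k ^ (t % m + barSum l) = α ^ k ^ (t % m) := by
      apply hmodeq
      have := modadd (t % m) t (barSum l) (modmod t)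
      rw [this, hcl, modmod]
    have h3 := hclm (t % m) ht' l h2
    rw [clm_eq_Wgt k α c (t % m) l hg] at h3
    rw [h1]
    exact_mod_cast h3
  -- one-step reduction of a long walk
  have step : ∀ (t : ℕ) (l : List (Fin n)), m < l.length → (∀ x ∈ l, c x ≠ 0) →
      ∃ l₂ : List (Fin n), (∀ x ∈ l₂, c x ≠ 0) ∧ l₂.length < l.length ∧
        (t + barSum l₂) % m = (t + barSum l) % m ∧ Wgt k α c t l₂ ≤ Wgt k α c t l := by
    intro t l hlen hg
    obtain ⟨s1, hs1, s2, hs2, hne, heq⟩ :=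
      Finset.exists_ne_map_eq_of_card_lt_of_maps_to
        (s := Finset.range (m + 1)) (t := Finset.range m) (by simp)
        (f := fun x => (t + barSum (l.take x)) % m)
        (fun x _ => Finset.mem_range.mpr (Nat.mod_lt _ hm))
    rw [Finset.mem_range] at hs1 hs2
    have main : ∀ s1 s2 : ℕ, s1 < s2 → s2 ≤ m →
        (t + barSum (l.take s1)) % m = (t + barSum (l.take s2)) % m →
        ∃ l₂ : List (Fin n), (∀ x ∈ l₂, c x ≠ 0) ∧ l₂.length < l.length ∧
          (t + barSum l₂) % m = (t + barSum l) % m ∧ Wgt k α c t l₂ ≤ Wgt k α c t l := by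
      clear hne heq hs1 hs2 s1 s2
      intro s1 s2 hlt hs2m heq2
      set mid := (l.take s2).drop s1 with hmid
      have htk : l.take s1 ++ mid = l.take s2 := by
        rw [hmid, show l.take s1 = (l.take s2).take s1 by
          rw [List.take_take, min_eq_left (le_of_lt hlt)]]
        exact List.take_append_drop s1 (l.take s2)
      have hsplit : l = (l.take s1 ++ mid) ++ l.drop s2 := by
        rw [htk]; exact (List.take_append_drop s2 l).symm
      have hb2 : barSum (l.take s2) = barSum (l.take s1) + barSum mid := by
        rw [← htk, barSum_append]
      rw [hb2] at heq2
      have heq3 : (t + barSum (l.take s1)) % m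
          = (t + barSum (l.take s1) + barSum mid) % m := by
        rw [heq2]; congr 1; omega
      refine ⟨l.take s1 ++ l.drop s2, ?_, ?_, ?_, ?_⟩
      · intro x hx
        rcases List.mem_append.mp hx with h | h
        · exact hg x (List.mem_of_mem_take h)
        · exact hg x (List.mem_of_mem_drop h)
      · rw [List.length_append, List.length_take, List.length_drop]
        omega
      · rw [barSum_append]
        conv_rhs => rw [hsplit]
        rw [barSum_append, barSum_append]
        rw [show t + (barSum (l.take s1) + barSum (l.drop s2))
            = t + barSum (l.take s1) + barSum (l.drop s2) by omega,
          show t + (barSum (l.take s1) + barSum mid + barSum (l.drop s2))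
            = t + barSum (l.take s1) + barSum mid + barSum (l.drop s2) by omega]
        exact modadd _ _ _ heq3
      · have hw : Wgt k α c t l
            = Wgt k α c t (l.take s1) + Wgt k α c (t + barSum (l.take s1)) mid
              + Wgt k α c (t + (barSum (l.take s1) + barSum mid)) (l.drop s2) := by
          conv_lhs => rw [hsplit]
          rw [Wgt_append, Wgt_append, barSum_append]
          try ring
        have hw2 : Wgt k α c t (l.take s1 ++ l.drop s2)
            = Wgt k α c t (l.take s1)
              + Wgt k α c (t + barSum (l.take s1)) (l.drop s2) := Wgt_append _ _ _ _ _ _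
        have hcong : Wgt k α c (t + barSum (l.take s1)) (l.drop s2)
            = Wgt k α c (t + (barSum (l.take s1) + barSum mid)) (l.drop s2) := by
          apply Wgt_congr
          intro s
          apply hmodeq
          apply modadd
          rw [heq3]; congr 1; omega
        have hmid0 : 0 ≤ Wgt k α c (t + barSum (l.take s1)) mid := by
          apply hcyc
          · intro x hx
            exact hg x (List.mem_of_mem_take (List.mem_of_mem_drop hx))
          · exact heq3.symm
        omega
    rcases Nat.lt_trichotomy s1 s2 with h | h | h
    · exact main s1 s2 h (by omega) heq
    · exact absurd h hne
    · exact main s2 s1 h (by omega) heq.symm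
  -- full reduction
  have key : ∀ (L : ℕ) (l : List (Fin n)), l.length ≤ L → ∀ t : ℕ, (∀ x ∈ l, c x ≠ 0) →
      ∃ l₂ : List (Fin n), (∀ x ∈ l₂, c x ≠ 0) ∧ l₂.length ≤ m ∧
        (t + barSum l₂) % m = (t + barSum l) % m ∧ Wgt k α c t l₂ ≤ Wgt k α c t l := by
    intro L
    induction L with
    | zero =>
        intro l hl t hg
        exact ⟨l, hg, by omega, rfl, le_refl _⟩
    | succ L ih =>
        intro l hl t hg
        by_cases hlen : l.length ≤ m
        · exact ⟨l, hg, hlen, rfl, le_refl _⟩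
        push_neg at hlen
        obtain ⟨l₂, hA, hB, hC, hD⟩ := step t l hlen hg
        obtain ⟨l₃, h3A, h3B, h3C, h3D⟩ := ih l₂ (by omega) t hA
        exact ⟨l₃, h3A, h3B, by rw [h3C, hC], le_trans h3D hD⟩
  -- the potential
  set E : ℕ → ℤ := Epot k α c m hm (by omega) with hE
  have hE0 : ∀ j : ℕ, j < m → 0 ≤ E j := by
    intro j hj
    have h1 := le_Epot k α c m hm (by omega) j (⟨j, hj⟩, ⟨0, Nat.succ_pos m⟩, fun _ => ⟨0, by omega⟩)
    rw [hE]
    refine le_trans (le_of_eq ?_) h1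
    rw [walkVal]
    split
    · simp [Wgt_nil]
    · rfl
  have hEnc : ∀ (j t : ℕ) (ht : t < m) (l : List (Fin n)), l.length ≤ m →
      (∀ x ∈ l, c x ≠ 0) → (t + barSum l) % m = j → - Wgt k α c t l ≤ E j := by
    intro j t ht l hlen hg hend
    have hdecode : (List.ofFn (fun s : Fin m => l.getD s.1 ⟨0, by omega⟩)).take l.length = l := by
      apply List.ext_getElem
      · simp
        omega
      · intro idx h1 h2
        simp only [List.getElem_take, List.getElem_ofFn]
        exact List.getD_eq_getElem l _ h2
    have h1 := le_Epot k α c m hm (by omega) j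
      (⟨t, ht⟩, ⟨l.length, by omega⟩, fun s => l.getD s.1 ⟨0, by omega⟩)
    rw [walkVal] at h1
    simp only [hdecode] at h1
    rw [if_pos ⟨hg, hend⟩] at h1
    exact h1
  -- edge inequality
  have hedge : ∀ j : ℕ, j < m → ∀ i : Fin n, c i ≠ 0 →
      E j ≤ E ((j + (i.1 + 1)) % m) + vInt (α ^ k ^ j) (c i) := by
    intro j hj i hci
    have hgood1 : ∀ x ∈ [i], c x ≠ 0 := by
      intro x hx; rw [List.mem_singleton] at hx; rw [hx]; exact hci
    obtain ⟨w₀, hw₀⟩ := Epot_eq_walkVal k α c m hm (by omega) j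
    rw [← hE] at hw₀
    by_cases hcond : (∀ x ∈ (List.ofFn w₀.2.2).take w₀.2.1.1, c x ≠ 0) ∧
        (w₀.1.1 + barSum ((List.ofFn w₀.2.2).take w₀.2.1.1)) % m = j
    · set t : ℕ := w₀.1.1 with htdef
      set l : List (Fin n) := (List.ofFn w₀.2.2).take w₀.2.1.1 with hldef
      have hEj : E j = - Wgt k α c t l := by rw [hw₀, walkVal, if_pos hcond]
      have htm : t < m := w₀.1.2
      have hext : Wgt k α c t (l ++ [i]) = Wgt k α c t l + vInt (α ^ k ^ j) (c i) := by
        rw [Wgt_append, Wgt_singleton]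
        congr 2
        apply hmodeq
        rw [hcond.2]
        exact (Nat.mod_eq_of_lt hj).symm
      have hgood2 : ∀ x ∈ l ++ [i], c x ≠ 0 := by
        intro x hx
        rcases List.mem_append.mp hx with h | h
        · exact hcond.1 x h
        · rw [List.mem_singleton] at h; rw [h]; exact hci
      obtain ⟨l₂, h2A, h2B, h2C, h2D⟩ := key (l ++ [i]).length (l ++ [i]) (le_refl _) t hgood2
      have hend2 : (t + barSum l₂) % m = (j + (i.1 + 1)) % m := by
        have hbs : barSum (l ++ [i]) = barSum l + (i.1 + 1) := by
          rw [barSum_append]; simp [barSum]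
        rw [h2C, hbs, show t + (barSum l + (i.1 + 1)) = (t + barSum l) + (i.1 + 1) by omega]
        exact modadd _ _ _ (by rw [hcond.2, Nat.mod_eq_of_lt hj])
      have := hEnc ((j + (i.1 + 1)) % m) t htm l₂ h2B h2A hend2
      rw [hext] at h2D
      omega
    · have hEj : E j = 0 := by rw [hw₀, walkVal, if_neg hcond]
      have hend1 : (j + barSum [i]) % m = (j + (i.1 + 1)) % m := by
        simp [barSum]
      have := hEnc ((j + (i.1 + 1)) % m) j hj [i]
        (by simp only [List.length_singleton]; omega) hgood1 hend1
      rw [Wgt_singleton] at this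
      omega
  -- the polynomial
  refine ⟨∏ t ∈ Finset.range m, (Polynomial.X - Polynomial.C (α ^ k ^ t)) ^ (E t).toNat,
    ?_, ?_⟩
  · apply Finset.prod_ne_zero_iff.mpr
    intro t _
    exact pow_ne_zero _ (Polynomial.X_sub_C_ne_zero _)
  set h : Polynomial K :=
    ∏ t ∈ Finset.range m, (Polynomial.X - Polynomial.C (α ^ k ^ t)) ^ (E t).toNat with hhdef
  have hh0 : h ≠ 0 := by
    apply Finset.prod_ne_zero_iff.mpr
    intro t _
    exact pow_ne_zero _ (Polynomial.X_sub_C_ne_zero _)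
  have hrm : ∀ s : ℕ, s < m → h.rootMultiplicity (α ^ k ^ s) = (E s).toNat := by
    intro s hs
    rw [hhdef, rootMult_prod_eq _ _ _
      (fun t _ => pow_ne_zero _ (Polynomial.X_sub_C_ne_zero _))]
    rw [Finset.sum_eq_single s]
    · rw [rootMult_pow _ _ (Polynomial.X_sub_C_ne_zero _), Polynomial.rootMultiplicity_X_sub_C,
        if_pos rfl, mul_one]
    · intro t ht hts
      rw [Finset.mem_range] at ht
      rw [rootMult_pow _ _ (Polynomial.X_sub_C_ne_zero _), Polynomial.rootMultiplicity_X_sub_C,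
        if_neg (fun he => hts (hdist t s ht hs he.symm)), mul_zero]
    · intro hs'
      exact absurd (Finset.mem_range.mpr hs) hs'
  intro j i
  by_cases hci : c i = 0
  · have : act k (toRat h) c i = 0 := by rw [act, hci, mul_zero]
    rw [this, vAt, if_pos rfl]
    exact le_top
  · set j0 := j % m with hj0def
    have hj0 : j0 < m := Nat.mod_lt _ hm
    have hβj : α ^ k ^ j = α ^ k ^ j0 := hmod j
    rw [hβj]
    set N : ℕ := k ^ (i.1 + 1) with hNdef
    have hNK : (N : K) ≠ 0 := by
      rw [hNdef]; push_cast; exact pow_ne_zero _ hkK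
    have hHne : h.comp (Polynomial.X ^ N) ≠ 0 := by
      intro hz
      rw [Polynomial.comp_eq_zero_iff] at hz
      rcases hz with hz | ⟨-, hXN⟩
      · exact hh0 hz
      · have h1 := congrArg Polynomial.natDegree hXN
        have hN1 : 1 ≤ N := Nat.one_le_iff_ne_zero.mpr (fun h0 => hNK (by rw [h0]; simp))
        rw [Polynomial.natDegree_X_pow, Polynomial.natDegree_C] at h1
        omega
    have hact : act k (toRat h) c i
        = toRat (h.comp (Polynomial.X ^ N) * (c i).num) / toRat (h * (c i).denom) := by
      rw [act, substPow_toRat, hNdef]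
      unfold toRat
      rw [map_mul, map_mul]
      conv_lhs => rw [← (c i).num_div_denom]
      rw [div_mul_div_comm]
    have hnum0 : (c i).num ≠ 0 := RatFunc.num_ne_zero hci
    have hden0 : (c i).denom ≠ 0 := (c i).denom_ne_zero
    have hβ0 : α ^ k ^ j0 ≠ 0 := pow_ne_zero _ hα0
    have hvi : vInt (α ^ k ^ j0) (act k (toRat h) c i)
        = (h.rootMultiplicity ((α ^ k ^ j0) ^ N) : ℤ)
          + (c i).num.rootMultiplicity (α ^ k ^ j0)
          - h.rootMultiplicity (α ^ k ^ j0)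
          - (c i).denom.rootMultiplicity (α ^ k ^ j0) := by
      rw [hact, vInt_div _ (mul_ne_zero hHne hnum0) (mul_ne_zero hh0 hden0),
        Polynomial.rootMultiplicity_mul (mul_ne_zero hHne hnum0),
        Polynomial.rootMultiplicity_mul (mul_ne_zero hh0 hden0),
        rootMult_comp_pow hβ0 hNK hh0]
      push_cast
      ring
    have hβN : (α ^ k ^ j0) ^ N = α ^ k ^ ((j0 + (i.1 + 1)) % m) := by
      rw [hNdef, pow_tower, hmod]
    have hact0 : act k (toRat h) c i ≠ 0 := by
      rw [hact]
      apply div_ne_zero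
      · exact toRat_ne_zero (mul_ne_zero hHne hnum0)
      · exact toRat_ne_zero (mul_ne_zero hh0 hden0)
    rw [vAt, if_neg hact0]
    have hgoal : 0 ≤ vInt (α ^ k ^ j0) (act k (toRat h) c i) := by
      rw [hvi, hβN, hrm _ hj0, hrm _ (Nat.mod_lt _ hm)]
      have hed := hedge j0 hj0 i hci
      have hv : vInt (α ^ k ^ j0) (c i)
          = ((c i).num.rootMultiplicity (α ^ k ^ j0) : ℤ)
            - (c i).denom.rootMultiplicity (α ^ k ^ j0) := rfl
      rw [hv] at hed
      have e1 := hE0 j0 hj0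
      have e2 := hE0 ((j0 + (i.1 + 1)) % m) (Nat.mod_lt _ hm)
      omega
    exact_mod_cast hgoal
end
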